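/- Suppose M(λ;η) L(λ) = L̃(λ) M(λ;η) holds for all λ ∈ ℂ with λ ∉ {η, λ_1, …, λ_N}, where L and L̃ are Lax matrices of the rational Lagrange chain with the same parameters w ≠ 0, λ_i, and M(λ;η) = [[λ − η + pq, p],[q, 1]]. Then comparing the leading asymptotics as λ → ∞ forces p = (1/(2w)) Σ_{j=1}^N y_j⁻ and q = (1/(2w)) Σ_{j=1}^N ỹ_j⁺. -/

import Mathlib

open Matrix Complex

noncomputable section

/-- The Lax matrix of the rational Lagrange chain in complex-conjugated coordinates:
`L_{11} = iw + iΣ_i [y_i³/(λ−λ_i) + z_i³/(λ−λ_i)²]`, `L_{12}` with `y_i⁻ = y_i¹ − i y_i²`,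
`L_{21}` with `y_i⁺ = y_i¹ + i y_i²`, `L_{22} = −L_{11}`. -/
def Lax {N : ℕ} (w : ℝ) (lam : Fin N → ℂ) (y z : Fin N → Fin 3 → ℝ) (l : ℂ) :
    Matrix (Fin 2) (Fin 2) ℂ :=
  !![I * w + I * ∑ i : Fin N, ((y i 2 : ℝ) / (l - lam i) + (z i 2 : ℝ) / (l - lam i) ^ 2),
      I * ∑ i : Fin N, (((y i 0 : ℝ) - I * (y i 1 : ℝ)) / (l - lam i)
        + ((z i 0 : ℝ) - I * (z i 1 : ℝ)) / (l - lam i) ^ 2);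
     I * ∑ i : Fin N, (((y i 0 : ℝ) + I * (y i 1 : ℝ)) / (l - lam i)
        + ((z i 0 : ℝ) + I * (z i 1 : ℝ)) / (l - lam i) ^ 2),
      -(I * w + I * ∑ i : Fin N, ((y i 2 : ℝ) / (l - lam i) + (z i 2 : ℝ) / (l - lam i) ^ 2))]

open Filter

private lemma tendsto_inv_sub (c : ℂ) :
    Tendsto (fun t : ℝ => ((t : ℂ) - c)⁻¹) atTop (nhds 0) := by
  have h1 : Tendsto (fun t : ℝ => ‖(t : ℂ) - c‖) atTop atTop := by
    apply tendsto_atTop_mono (fun t => ?_)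
      (tendsto_atTop_add_const_right _ (-‖c‖) tendsto_id)
    have h2 : ‖(t : ℂ)‖ - ‖c‖ ≤ ‖(t : ℂ) - c‖ := norm_sub_norm_le _ _
    have h3 : t ≤ ‖(t : ℂ)‖ := by
      rw [Complex.norm_real, Real.norm_eq_abs]; exact le_abs_self t
    simp only [id_eq]
    linarith
  rw [tendsto_zero_iff_norm_tendsto_zero]
  simp only [norm_inv]; exact h1.inv_tendsto_atTop

private lemma eventually_ne_atTop' (c : ℂ) : ∀ᶠ t : ℝ in atTop, (t : ℂ) ≠ c := by
  filter_upwards [eventually_gt_atTop ‖c‖] with t ht hc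
  rw [← hc, Complex.norm_real, Real.norm_eq_abs] at ht
  exact absurd ht (not_lt.mpr (le_abs_self t))

private lemma tendsto_ratio_one (c e : ℂ) :
    Tendsto (fun t : ℝ => ((t : ℂ) - c) / ((t : ℂ) - e)) atTop (nhds 1) := by
  have h : Tendsto (fun t : ℝ => 1 + (e - c) * ((t : ℂ) - e)⁻¹) atTop (nhds 1) := by
    have := ((tendsto_inv_sub e).const_mul (e - c)).const_add (1 : ℂ)
    simpa using this
  refine h.congr' ?_
  filter_upwards [eventually_ne_atTop' e] with t ht
  have h0 : (t : ℂ) - e ≠ 0 := sub_ne_zero.mpr ht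
  field_simp
  ring

private lemma tendsto_ratio_sq (c e : ℂ) :
    Tendsto (fun t : ℝ => ((t : ℂ) - c) / ((t : ℂ) - e) ^ 2) atTop (nhds 0) := by
  have h : Tendsto (fun t : ℝ => ((t : ℂ) - e)⁻¹ + (e - c) * (((t : ℂ) - e)⁻¹) ^ 2)
      atTop (nhds 0) := by
    have := (tendsto_inv_sub e).add (((tendsto_inv_sub e).pow 2).const_mul (e - c))
    simpa using this
  refine h.congr' ?_
  filter_upwards [eventually_ne_atTop' e] with t ht
  have h0 : (t : ℂ) - e ≠ 0 := sub_ne_zero.mpr ht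
  field_simp
  ring

private lemma tendsto_pole_zero (a b e : ℂ) :
    Tendsto (fun t : ℝ => a / ((t : ℂ) - e) + b / ((t : ℂ) - e) ^ 2) atTop (nhds 0) := by
  have := ((tendsto_inv_sub e).const_mul a).add
    (((tendsto_inv_sub e).pow 2).const_mul b)
  simpa [div_eq_mul_inv, inv_pow] using this

private lemma tendsto_term (c a b e : ℂ) :
    Tendsto (fun t : ℝ => ((t : ℂ) - c) * (a / ((t : ℂ) - e) + b / ((t : ℂ) - e) ^ 2))
      atTop (nhds a) := by
  have h := ((tendsto_ratio_one c e).const_mul a).add ((tendsto_ratio_sq c e).const_mul b)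
  have h' : Tendsto (fun t : ℝ => a * (((t : ℂ) - c) / ((t : ℂ) - e))
      + b * (((t : ℂ) - c) / ((t : ℂ) - e) ^ 2)) atTop (nhds a) := by simpa using h
  refine h'.congr fun t => ?_
  ring

private lemma tendsto_mulsum {N : ℕ} (c : ℂ) (a b : Fin N → ℂ) (e : Fin N → ℂ) :
    Tendsto (fun t : ℝ => ((t : ℂ) - c)
        * ∑ i : Fin N, (a i / ((t : ℂ) - e i) + b i / ((t : ℂ) - e i) ^ 2))
      atTop (nhds (∑ i : Fin N, a i)) := by
  have h := tendsto_finset_sum Finset.univ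
    (fun i (_ : i ∈ Finset.univ) => tendsto_term c (a i) (b i) (e i))
  refine h.congr fun t => ?_
  exact (Finset.mul_sum _ _ _).symm

private lemma tendsto_sum_zero {N : ℕ} (a b e : Fin N → ℂ) :
    Tendsto (fun t : ℝ => ∑ i : Fin N, (a i / ((t : ℂ) - e i) + b i / ((t : ℂ) - e i) ^ 2))
      atTop (nhds 0) := by
  have h := tendsto_finset_sum Finset.univ
    (fun i (_ : i ∈ Finset.univ) => tendsto_pole_zero (a i) (b i) (e i))
  simpa using h

/-- If `M(λ;η) L(λ) = L̃(λ) M(λ;η)` holds for all admissible `λ`, where `L, L̃` are Lax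
matrices of the rational Lagrange chain with the same `w ≠ 0` and `λ_i`, and
`M(λ;η) = [[λ − η + pq, p],[q, 1]]`, then comparing asymptotics as `λ → ∞` forces
`p = (1/(2w)) Σ_j y_j⁻` and `q = (1/(2w)) Σ_j ỹ_j⁺`. -/
theorem one_point_backlund_pq {N : ℕ} (w : ℝ) (hw : w ≠ 0)
    (lam : Fin N → ℂ) (hlam : Function.Injective lam)
    (y z yt zt : Fin N → Fin 3 → ℝ) (η p q : ℂ)
    (h : ∀ l : ℂ, l ≠ η → (∀ i, l ≠ lam i) →
      (!![l - η + p * q, p; q, 1] : Matrix (Fin 2) (Fin 2) ℂ) * Lax w lam y z l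
        = Lax w lam yt zt l * !![l - η + p * q, p; q, 1]) :
    p = (1 / (2 * (w : ℂ))) * ∑ j : Fin N, ((y j 0 : ℝ) - I * (y j 1 : ℝ)) ∧
    q = (1 / (2 * (w : ℂ))) * ∑ j : Fin N, ((yt j 0 : ℝ) + I * (yt j 1 : ℝ)) := by
  have hw' : (w : ℂ) ≠ 0 := Complex.ofReal_ne_zero.mpr hw
  have hev : ∀ᶠ t : ℝ in atTop, ((t : ℂ) ≠ η ∧ ∀ i, (t : ℂ) ≠ lam i) := by
    refine (eventually_ne_atTop' η).and ?_
    exact eventually_all.mpr fun i => eventually_ne_atTop' (lam i)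
  -- the (0,1) entry
  have hF1 : Tendsto (fun t : ℝ =>
      I * (((t : ℂ) - (η - p * q)) * ∑ i : Fin N, (((y i 0 : ℝ) - I * (y i 1 : ℝ)) / ((t : ℂ) - lam i)
          + ((z i 0 : ℝ) - I * (z i 1 : ℝ)) / ((t : ℂ) - lam i) ^ 2))
      - p * (I * (w : ℂ) + I * ∑ i : Fin N, ((y i 2 : ℝ) / ((t : ℂ) - lam i)
          + (z i 2 : ℝ) / ((t : ℂ) - lam i) ^ 2))
      - (I * (w : ℂ) + I * ∑ i : Fin N, ((yt i 2 : ℝ) / ((t : ℂ) - lam i)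
          + (zt i 2 : ℝ) / ((t : ℂ) - lam i) ^ 2)) * p
      - I * ∑ i : Fin N, (((yt i 0 : ℝ) - I * (yt i 1 : ℝ)) / ((t : ℂ) - lam i)
          + ((zt i 0 : ℝ) - I * (zt i 1 : ℝ)) / ((t : ℂ) - lam i) ^ 2)) atTop
      (nhds (I * (∑ j : Fin N, ((y j 0 : ℝ) - I * (y j 1 : ℝ)))
        - p * (I * (w : ℂ) + I * 0) - (I * (w : ℂ) + I * 0) * p - I * 0)) := by
    refine Tendsto.sub (Tendsto.sub (Tendsto.sub ?_ ?_) ?_) ?_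
    · exact (tendsto_mulsum (η - p * q) (fun i => ((y i 0 : ℂ) - I * (y i 1 : ℝ)))
        (fun i => ((z i 0 : ℂ) - I * (z i 1 : ℝ))) lam).const_mul I
    · exact (tendsto_const_nhds.add ((tendsto_sum_zero (fun i => ((y i 2 : ℝ) : ℂ))
        (fun i => ((z i 2 : ℝ) : ℂ)) lam).const_mul I)).const_mul p
    · exact (tendsto_const_nhds.add ((tendsto_sum_zero (fun i => ((yt i 2 : ℝ) : ℂ))
        (fun i => ((zt i 2 : ℝ) : ℂ)) lam).const_mul I)).mul_const p
    · exact (tendsto_sum_zero (fun i => ((yt i 0 : ℂ) - I * (yt i 1 : ℝ)))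
        (fun i => ((zt i 0 : ℂ) - I * (zt i 1 : ℝ))) lam).const_mul I
  have hz1 : Tendsto (fun t : ℝ =>
      I * (((t : ℂ) - (η - p * q)) * ∑ i : Fin N, (((y i 0 : ℝ) - I * (y i 1 : ℝ)) / ((t : ℂ) - lam i)
          + ((z i 0 : ℝ) - I * (z i 1 : ℝ)) / ((t : ℂ) - lam i) ^ 2))
      - p * (I * (w : ℂ) + I * ∑ i : Fin N, ((y i 2 : ℝ) / ((t : ℂ) - lam i)
          + (z i 2 : ℝ) / ((t : ℂ) - lam i) ^ 2))
      - (I * (w : ℂ) + I * ∑ i : Fin N, ((yt i 2 : ℝ) / ((t : ℂ) - lam i)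
          + (zt i 2 : ℝ) / ((t : ℂ) - lam i) ^ 2)) * p
      - I * ∑ i : Fin N, (((yt i 0 : ℝ) - I * (yt i 1 : ℝ)) / ((t : ℂ) - lam i)
          + ((zt i 0 : ℝ) - I * (zt i 1 : ℝ)) / ((t : ℂ) - lam i) ^ 2)) atTop (nhds 0) := by
    refine tendsto_const_nhds.congr' ?_
    filter_upwards [hev] with t ht
    obtain ⟨h1, h2⟩ := ht
    have h01 := congrFun (congrFun (h (t : ℂ) h1 h2) 0) 1
    simp only [Lax, Matrix.mul_apply, Fin.sum_univ_two, Matrix.of_apply, Matrix.cons_val',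
      Matrix.cons_val_zero, Matrix.cons_val_one, Matrix.head_cons, Matrix.empty_val',
      Matrix.cons_val_fin_one, Matrix.head_fin_const] at h01
    linear_combination -h01
  have e1 := tendsto_nhds_unique hF1 hz1
  -- the (1,0) entry
  have hF2 : Tendsto (fun t : ℝ =>
      q * (I * (w : ℂ) + I * ∑ i : Fin N, ((y i 2 : ℝ) / ((t : ℂ) - lam i)
          + (z i 2 : ℝ) / ((t : ℂ) - lam i) ^ 2))
      + I * ∑ i : Fin N, (((y i 0 : ℝ) + I * (y i 1 : ℝ)) / ((t : ℂ) - lam i)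
          + ((z i 0 : ℝ) + I * (z i 1 : ℝ)) / ((t : ℂ) - lam i) ^ 2)
      - I * (((t : ℂ) - (η - p * q)) * ∑ i : Fin N, (((yt i 0 : ℝ) + I * (yt i 1 : ℝ)) / ((t : ℂ) - lam i)
          + ((zt i 0 : ℝ) + I * (zt i 1 : ℝ)) / ((t : ℂ) - lam i) ^ 2))
      + (I * (w : ℂ) + I * ∑ i : Fin N, ((yt i 2 : ℝ) / ((t : ℂ) - lam i)
          + (zt i 2 : ℝ) / ((t : ℂ) - lam i) ^ 2)) * q) atTop
      (nhds (q * (I * (w : ℂ) + I * 0) + I * 0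
        - I * (∑ j : Fin N, ((yt j 0 : ℝ) + I * (yt j 1 : ℝ))) + (I * (w : ℂ) + I * 0) * q)) := by
    refine Tendsto.add (Tendsto.sub (Tendsto.add ?_ ?_) ?_) ?_
    · exact (tendsto_const_nhds.add ((tendsto_sum_zero (fun i => ((y i 2 : ℝ) : ℂ))
        (fun i => ((z i 2 : ℝ) : ℂ)) lam).const_mul I)).const_mul q
    · exact (tendsto_sum_zero (fun i => ((y i 0 : ℂ) + I * (y i 1 : ℝ)))
        (fun i => ((z i 0 : ℂ) + I * (z i 1 : ℝ))) lam).const_mul I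
    · exact (tendsto_mulsum (η - p * q) (fun i => ((yt i 0 : ℂ) + I * (yt i 1 : ℝ)))
        (fun i => ((zt i 0 : ℂ) + I * (zt i 1 : ℝ))) lam).const_mul I
    · exact (tendsto_const_nhds.add ((tendsto_sum_zero (fun i => ((yt i 2 : ℝ) : ℂ))
        (fun i => ((zt i 2 : ℝ) : ℂ)) lam).const_mul I)).mul_const q
  have hz2 : Tendsto (fun t : ℝ =>
      q * (I * (w : ℂ) + I * ∑ i : Fin N, ((y i 2 : ℝ) / ((t : ℂ) - lam i)
          + (z i 2 : ℝ) / ((t : ℂ) - lam i) ^ 2))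
      + I * ∑ i : Fin N, (((y i 0 : ℝ) + I * (y i 1 : ℝ)) / ((t : ℂ) - lam i)
          + ((z i 0 : ℝ) + I * (z i 1 : ℝ)) / ((t : ℂ) - lam i) ^ 2)
      - I * (((t : ℂ) - (η - p * q)) * ∑ i : Fin N, (((yt i 0 : ℝ) + I * (yt i 1 : ℝ)) / ((t : ℂ) - lam i)
          + ((zt i 0 : ℝ) + I * (zt i 1 : ℝ)) / ((t : ℂ) - lam i) ^ 2))
      + (I * (w : ℂ) + I * ∑ i : Fin N, ((yt i 2 : ℝ) / ((t : ℂ) - lam i)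
          + (zt i 2 : ℝ) / ((t : ℂ) - lam i) ^ 2)) * q) atTop (nhds 0) := by
    refine tendsto_const_nhds.congr' ?_
    filter_upwards [hev] with t ht
    obtain ⟨h1, h2⟩ := ht
    have h10 := congrFun (congrFun (h (t : ℂ) h1 h2) 1) 0
    simp only [Lax, Matrix.mul_apply, Fin.sum_univ_two, Matrix.of_apply, Matrix.cons_val',
      Matrix.cons_val_zero, Matrix.cons_val_one, Matrix.head_cons, Matrix.empty_val',
      Matrix.cons_val_fin_one, Matrix.head_fin_const] at h10
    linear_combination -h10
  have e2 := tendsto_nhds_unique hF2 hz2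
  constructor
  · have h2w : 2 * (w : ℂ) * p = ∑ j : Fin N, ((y j 0 : ℝ) - I * (y j 1 : ℝ)) := by
      linear_combination I * e1 + (2 * (w : ℂ) * p
        - ∑ j : Fin N, ((y j 0 : ℝ) - I * (y j 1 : ℝ))) * Complex.I_sq
    rw [← h2w]
    field_simp
  · have h2w : 2 * (w : ℂ) * q = ∑ j : Fin N, ((yt j 0 : ℝ) + I * (yt j 1 : ℝ)) := by
      linear_combination -I * e2 + (2 * (w : ℂ) * q
        - ∑ j : Fin N, ((yt j 0 : ℝ) + I * (yt j 1 : ℝ))) * Complex.I_sq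
    rw [← h2w]
    field_simp
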